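/- Let $K$ be a compact Hausdorff topological space, $X$ a Banach space, and $t_0$ an accumulation point of $K$. If $f \in C(K,X)$ has $\|f\|_\infty = 1$ and $\|f(t_0)\| = 1$, then $f$ is a ccs Daugavet point: for every convex combination of slices $C$ of the unit ball of $C(K,X)$, $\sup_{g \in C} \|f - g\|_\infty = 2$. -/

import Mathlib

open Metric Set Pointwise Filter Topology

variable {X : Type*} [NormedAddCommGroup X] [NormedSpace ℝ X]

def sliceSet (f : X →L[ℝ] ℝ) (δ : ℝ) : Set X :=
  {y ∈ closedBall (0 : X) 1 | 1 - δ < f y}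

def IsSlice (S : Set X) : Prop :=
  ∃ (f : X →L[ℝ] ℝ) (δ : ℝ), ‖f‖ = 1 ∧ 0 < δ ∧ S = sliceSet f δ

def IsCCS (C : Set X) : Prop :=
  ∃ (n : ℕ) (l : Fin n → ℝ) (S : Fin n → Set X),
    (∀ i, 0 < l i) ∧ (∑ i, l i) = 1 ∧ (∀ i, IsSlice (S i)) ∧
    C = ∑ i, l i • S i

def RelWeakOpen (V : Set X) : Prop :=
  ∃ U : Set X, IsOpen (show Set (WeakSpace ℝ X) from U) ∧ V = U ∩ closedBall 0 1

def weakClosure (A : Set X) : Set X :=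
  @closure (WeakSpace ℝ X) _ A

def SuperDeltaPoint (x : X) : Prop :=
  ∀ V : Set X, RelWeakOpen V → x ∈ V → ∀ ε > 0, ∃ y ∈ V, 2 - ε < ‖x - y‖

def SuperDaugavetPoint (x : X) : Prop :=
  ∀ V : Set X, RelWeakOpen V → V.Nonempty → ∀ ε > 0, ∃ y ∈ V, 2 - ε < ‖x - y‖

def CcsDeltaPoint (x : X) : Prop :=
  ∀ C : Set X, IsCCS C → x ∈ C → ∀ ε > 0, ∃ y ∈ C, 2 - ε < ‖x - y‖

def CcsDaugavetPoint (x : X) : Prop :=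
  ∀ C : Set X, IsCCS C → ∀ ε > 0, ∃ y ∈ C, 2 - ε < ‖x - y‖

-- points + disjoint opens
lemma exists_points_disjoint_opens {K : Type*} [TopologicalSpace K] [T2Space K]
    (t₀ : K) (hacc : t₀ ∈ closure ({t₀}ᶜ : Set K)) (W : Set K) (hW : IsOpen W) (ht₀ : t₀ ∈ W)
    (N : ℕ) :
    ∃ (t : Fin N → K) (U : Fin N → Set K),
      (∀ j, t j ∈ W) ∧ (∀ j, t j ∈ U j) ∧ (∀ j, IsOpen (U j)) ∧
      (∀ j k, j ≠ k → Disjoint (U j) (U k)) := by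
  suffices h : ∃ (t : Fin N → K) (U : Fin N → Set K) (W' : Set K),
      IsOpen W' ∧ t₀ ∈ W' ∧ W' ⊆ W ∧
      (∀ j, t j ∈ W) ∧ (∀ j, t j ∈ U j) ∧ (∀ j, IsOpen (U j)) ∧
      (∀ j, Disjoint (U j) W') ∧
      (∀ j k, j ≠ k → Disjoint (U j) (U k)) by
    obtain ⟨t, U, W', _, _, _, h1, h2, h3, _, h5⟩ := h
    exact ⟨t, U, h1, h2, h3, h5⟩
  induction N with
  | zero =>
    exact ⟨Fin.elim0, Fin.elim0, W, hW, ht₀, subset_rfl,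
      fun j => j.elim0, fun j => j.elim0, fun j => j.elim0, fun j => j.elim0,
      fun j => j.elim0⟩
  | succ N ih =>
    obtain ⟨t, U, W', hW'o, hW't₀, hW'W, ht, htU, hUo, hUW', hUd⟩ := ih
    obtain ⟨s, hsW', hs⟩ : ∃ s, s ∈ W' ∧ s ≠ t₀ := by
      obtain ⟨s, hs1, hs2⟩ := (_root_.mem_closure_iff.1 hacc) W' hW'o hW't₀
      exact ⟨s, hs1, hs2⟩
    obtain ⟨A, B, hAo, hBo, hsA, ht₀B, hAB⟩ := t2_separation hs
    refine ⟨Fin.snoc t s, Fin.snoc U (A ∩ W'), B ∩ W', hBo.inter hW'o, ⟨ht₀B, hW't₀⟩,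
      (inter_subset_right).trans hW'W, ?_, ?_, ?_, ?_, ?_⟩
    · intro j
      refine Fin.lastCases ?_ ?_ j
      · simpa using hW'W hsW'
      · intro i; simpa using ht i
    · intro j
      refine Fin.lastCases ?_ ?_ j
      · simp [hsA, hsW']
      · intro i; simpa using htU i
    · intro j
      refine Fin.lastCases ?_ ?_ j
      · simpa using hAo.inter hW'o
      · intro i; simpa using hUo i
    · intro j
      refine Fin.lastCases ?_ ?_ j
      · simpa using (hAB.mono inter_subset_left inter_subset_left :
          Disjoint (A ∩ W') (B ∩ W'))
      · intro i
        simp only [Fin.snoc_castSucc]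
        exact (hUW' i).mono_right inter_subset_right
    · intro j k hjk
      rcases eq_or_ne j (Fin.last N) with rfl | hj
      · rcases eq_or_ne k (Fin.last N) with rfl | hk
        · exact absurd rfl hjk
        · obtain ⟨i, rfl⟩ := Fin.exists_castSucc_eq.mpr hk
          simp only [Fin.snoc_last, Fin.snoc_castSucc]
          exact ((hUW' i).mono_right inter_subset_right).symm
      · obtain ⟨i, rfl⟩ := Fin.exists_castSucc_eq.mpr hj
        rcases eq_or_ne k (Fin.last N) with rfl | hk
        · simp only [Fin.snoc_last, Fin.snoc_castSucc]
          exact (hUW' i).mono_right inter_subset_right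
        · obtain ⟨i', rfl⟩ := Fin.exists_castSucc_eq.mpr hk
          simp only [Fin.snoc_castSucc]
          exact hUd i i' (fun h => hjk (by rw [h]))

lemma exists_bumps {K : Type*} [TopologicalSpace K] [CompactSpace K] [T2Space K]
    (t₀ : K) (hacc : t₀ ∈ closure ({t₀}ᶜ : Set K)) (W : Set K) (hW : IsOpen W) (ht₀ : t₀ ∈ W)
    (N : ℕ) :
    ∃ (t : Fin N → K) (ψ : Fin N → C(K, ℝ)),
      (∀ j, t j ∈ W) ∧ (∀ j, ψ j (t j) = 1) ∧ (∀ j s, ψ j s ∈ Icc (0:ℝ) 1) ∧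
      (∀ j k, j ≠ k → ∀ s, ψ j s = 0 ∨ ψ k s = 0) := by
  obtain ⟨t, U, htW, htU, hUo, hUd⟩ := exists_points_disjoint_opens t₀ hacc W hW ht₀ N
  have hbump : ∀ j, ∃ ψ : C(K, ℝ),
      (∀ s ∉ U j, ψ s = 0) ∧ ψ (t j) = 1 ∧ ∀ s, ψ s ∈ Icc (0:ℝ) 1 := by
    intro j
    obtain ⟨ψ, h0, h1, h01⟩ := exists_continuous_zero_one_of_isClosed
      (hUo j).isClosed_compl isClosed_singleton
      (by rw [Set.disjoint_singleton_right, Set.mem_compl_iff, not_not]; exact htU j)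
    exact ⟨ψ, fun s hs => h0 hs, h1 rfl, h01⟩
  choose ψ hψ0 hψ1 hψ01 using hbump
  refine ⟨t, ψ, htW, hψ1, hψ01, ?_⟩
  intro j k hjk s
  by_cases hj : ψ j s = 0
  · exact Or.inl hj
  · refine Or.inr (hψ0 k s ?_)
    intro hsk
    have hsj : s ∈ U j := by by_contra h; exact hj (hψ0 j s h)
    exact (hUd j k hjk).ne_of_mem hsj hsk rfl

lemma cmap_sum_apply {ι K X : Type*} [TopologicalSpace K] [AddCommMonoid X]
    [TopologicalSpace X] [ContinuousAdd X] (s : Finset ι) (f : ι → C(K, X)) (t : K) :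
    (∑ i ∈ s, f i) t = ∑ i ∈ s, f i t := by
  induction s using Finset.cons_induction with
  | empty => simp
  | cons a s ha ih => simp [Finset.sum_cons, ih]


theorem ck_norm_attained_at_accumulation_ccsDaugavet
    {K : Type*} [TopologicalSpace K] [CompactSpace K] [T2Space K]
    {X : Type*} [NormedAddCommGroup X] [NormedSpace ℝ X] [CompleteSpace X]
    (t₀ : K) (hacc : t₀ ∈ closure ({t₀}ᶜ : Set K))
    (f : C(K, X)) (hf : ‖f‖ = 1) (hft₀ : ‖f t₀‖ = 1) :
    CcsDaugavetPoint f := by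
  intro C hC ε hε
  obtain ⟨n, l, S, hl, hl1, hS, rfl⟩ := hC
  have hn : n ≠ 0 := by rintro rfl; simp at hl1
  haveI : Nonempty (Fin n) := ⟨⟨0, Nat.pos_of_ne_zero hn⟩⟩
  choose φ δ hφ hδ hSeq using hS
  -- pick slice elements with margin
  have hpick : ∀ i, ∃ h : C(K, X), ‖h‖ ≤ 1 ∧ 1 - δ i / 2 < φ i h := by
    intro i
    have h1 : 1 - δ i / 2 < ‖φ i‖ := by rw [hφ i]; linarith [hδ i]
    obtain ⟨x, hx1, hx2⟩ := (φ i).exists_lt_apply_of_lt_opNorm h1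
    rcases le_or_gt 0 (φ i x) with hx | hx
    · exact ⟨x, hx1.le, by rwa [Real.norm_eq_abs, abs_of_nonneg hx] at hx2⟩
    · refine ⟨-x, by simpa using hx1.le, ?_⟩
      rw [map_neg]
      rwa [Real.norm_eq_abs, abs_of_neg hx] at hx2
  choose h hh1 hh2 using hpick
  -- δmin
  set δm : ℝ := Finset.univ.inf' Finset.univ_nonempty δ with hδm_def
  have hδm : 0 < δm := (Finset.lt_inf'_iff _).2 fun i _ => hδ i
  have hδmle : ∀ i, δm ≤ δ i := fun i => Finset.inf'_le _ (Finset.mem_univ i)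
  -- choose N
  obtain ⟨N, hN0, hNlt⟩ : ∃ N : ℕ, 0 < N ∧ 2 * n / (N : ℝ) < δm / 2 := by
    refine ⟨⌈4 * n / δm⌉₊ + 1, Nat.succ_pos _, ?_⟩
    have h1 : (4 * n / δm : ℝ) < (⌈4 * n / δm⌉₊ + 1 : ℕ) := by
      push_cast
      exact lt_of_le_of_lt (Nat.le_ceil _) (by linarith)
    set M : ℕ := ⌈4 * n / δm⌉₊ + 1
    have hM0 : (0 : ℝ) < M := by positivity
    rw [div_lt_div_iff₀ hM0 two_pos]
    rw [div_lt_iff₀ hδm] at h1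
    linarith
  haveI : Nonempty (Fin N) := ⟨⟨0, hN0⟩⟩
  -- the neighborhood W
  set W : Set K := {s | ‖f s - f t₀‖ < ε} with hW_def
  have hWo : IsOpen W :=
    isOpen_lt ((f.continuous.sub continuous_const).norm) continuous_const
  have hWt₀ : t₀ ∈ W := by simp [hW_def, hε]
  obtain ⟨t, ψ, htW, hψ1, hψ01, hψd⟩ := exists_bumps t₀ hacc W hWo hWt₀ N
  set v : X := -(f t₀) with hv
  have hv1 : ‖v‖ = 1 := by rw [hv, norm_neg]; exact hft₀
  -- perturbations
  set q : Fin n → Fin N → C(K, X) := fun i j =>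
    ⟨fun s => ψ j s • (v - h i s),
      (ψ j).continuous.smul (continuous_const.sub (h i).continuous)⟩ with hq
  have hqapp : ∀ i j s, q i j s = ψ j s • (v - h i s) := fun i j s => rfl
  -- key mass bound
  have key : ∀ i, ∑ j, |φ i (q i j)| ≤ 2 := by
    intro i
    set c : Fin N → ℝ := fun j => if 0 ≤ φ i (q i j) then 1 else -1 with hc
    have hsum : ∑ j, |φ i (q i j)| = φ i (∑ j, c j • q i j) := by
      rw [map_sum]
      refine Finset.sum_congr rfl fun j _ => ?_
      rw [map_smul]
      by_cases hj : 0 ≤ φ i (q i j)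
      · simp [hc, hj, abs_of_nonneg hj]
      · push_neg at hj
        simp [hc, not_le.2 hj, abs_of_neg hj]
    have hz : ‖∑ j, c j • q i j‖ ≤ 2 := by
      rw [ContinuousMap.norm_le _ (by norm_num : (0:ℝ) ≤ 2)]
      intro s
      have he : (∑ j, c j • q i j) s = (∑ j, c j * ψ j s) • (v - h i s) := by
        rw [cmap_sum_apply, Finset.sum_smul]
        refine Finset.sum_congr rfl fun j _ => ?_
        rw [ContinuousMap.smul_apply, hqapp, smul_smul]
      rw [he, norm_smul, Real.norm_eq_abs]
      have habs : |∑ j, c j * ψ j s| ≤ 1 := by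
        have h1 : |∑ j, c j * ψ j s| ≤ ∑ j, ψ j s := by
          refine le_trans (Finset.abs_sum_le_sum_abs _ _) ?_
          refine Finset.sum_le_sum fun j _ => ?_
          rw [abs_mul]
          have : |c j| = 1 := by by_cases hj : 0 ≤ φ i (q i j) <;> simp [hc, hj]
          rw [this, one_mul, abs_of_nonneg (hψ01 j s).1]
        refine h1.trans ?_
        by_cases hall : ∀ j, ψ j s = 0
        · simp [hall]
        · push_neg at hall
          obtain ⟨j₀, hj₀⟩ := hall
          have : ∑ j, ψ j s = ψ j₀ s :=
            Finset.sum_eq_single_of_mem j₀ (Finset.mem_univ _)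
              (fun k _ hk => (hψd k j₀ hk s).resolve_right hj₀)
          rw [this]; exact (hψ01 j₀ s).2
      have hvh : ‖v - h i s‖ ≤ 2 := by
        refine (norm_sub_le _ _).trans ?_
        have := (ContinuousMap.norm_coe_le_norm (h i) s).trans (hh1 i)
        linarith [hv1.le]
      calc |∑ j, c j * ψ j s| * ‖v - h i s‖ ≤ 1 * 2 := by
            exact mul_le_mul habs hvh (norm_nonneg _) zero_le_one
        _ = 2 := by norm_num
    rw [hsum]
    calc φ i (∑ j, c j • q i j) ≤ |φ i (∑ j, c j • q i j)| := le_abs_self _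
      _ = ‖φ i (∑ j, c j • q i j)‖ := (Real.norm_eq_abs _).symm
      _ ≤ ‖φ i‖ * ‖∑ j, c j • q i j‖ := (φ i).le_opNorm _
      _ ≤ 1 * 2 := by rw [hφ i]; exact mul_le_mul_of_nonneg_left hz zero_le_one
      _ = 2 := by norm_num
  -- pigeonhole
  obtain ⟨j₀, hj₀⟩ : ∃ j : Fin N, ∑ i, |φ i (q i j)| ≤ 2 * n / N := by
    by_contra hcon
    push_neg at hcon
    have h1 : (N : ℝ) * (2 * n / N) < ∑ j : Fin N, ∑ i, |φ i (q i j)| := by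
      have := Finset.sum_lt_sum_of_nonempty (Finset.univ_nonempty (α := Fin N))
        (fun j _ => hcon j)
      simpa [Finset.sum_const, Finset.card_univ, nsmul_eq_mul] using this
    have h2 : ∑ j : Fin N, ∑ i, |φ i (q i j)| = ∑ i : Fin n, ∑ j, |φ i (q i j)| :=
      Finset.sum_comm
    have h3 : ∑ i : Fin n, ∑ j, |φ i (q i j)| ≤ ∑ i : Fin n, (2:ℝ) :=
      Finset.sum_le_sum fun i _ => key i
    have hNne : (N : ℝ) ≠ 0 := Nat.cast_ne_zero.2 hN0.ne'
    rw [mul_div_cancel₀ _ hNne] at h1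
    simp only [Finset.sum_const, Finset.card_univ, Fintype.card_fin, nsmul_eq_mul] at h3
    rw [h2] at h1
    linarith
  -- perturbed functions
  set g : Fin n → C(K, X) := fun i => h i + q i j₀ with hg
  have hgapp : ∀ i s, g i s = h i s + ψ j₀ s • (v - h i s) := fun i s => rfl
  have hgball : ∀ i, ‖g i‖ ≤ 1 := by
    intro i
    rw [ContinuousMap.norm_le _ zero_le_one]
    intro s
    have hgs : g i s = (1 - ψ j₀ s) • h i s + ψ j₀ s • v := by
      rw [hgapp]; module
    rw [hgs]
    have h01 := hψ01 j₀ s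
    have hhs : ‖h i s‖ ≤ 1 := (ContinuousMap.norm_coe_le_norm (h i) s).trans (hh1 i)
    calc ‖(1 - ψ j₀ s) • h i s + ψ j₀ s • v‖
        ≤ ‖(1 - ψ j₀ s) • h i s‖ + ‖ψ j₀ s • v‖ := norm_add_le _ _
      _ = |1 - ψ j₀ s| * ‖h i s‖ + |ψ j₀ s| * ‖v‖ := by
          rw [norm_smul, norm_smul, Real.norm_eq_abs, Real.norm_eq_abs]
      _ ≤ (1 - ψ j₀ s) * 1 + ψ j₀ s * 1 := by
          rw [abs_of_nonneg (by linarith [h01.2]), abs_of_nonneg h01.1, hv1]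
          gcongr
          linarith [h01.2]
      _ = 1 := by ring
  have hqsmall : ∀ i, |φ i (q i j₀)| ≤ 2 * n / N :=
    fun i => le_trans (Finset.single_le_sum (f := fun k => |φ k (q k j₀)|)
      (fun k _ => abs_nonneg _) (Finset.mem_univ i)) hj₀
  have hgslice : ∀ i, g i ∈ S i := by
    intro i
    rw [hSeq i]
    refine ⟨mem_closedBall_zero_iff.2 (hgball i), ?_⟩
    have heq : φ i (g i) = φ i (h i) + φ i (q i j₀) := by rw [hg]; simp
    have h1 := hh2 i
    have h2 := hqsmall i
    have h3 := hδmle i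
    have h4 := neg_abs_le (φ i (q i j₀))
    rw [heq]
    linarith
  refine ⟨∑ i, l i • g i, ?_, ?_⟩
  · rw [Set.mem_fintype_sum]
    exact ⟨fun i => l i • g i, fun i => Set.smul_mem_smul_set (hgslice i), rfl⟩
  · have heval : (∑ i, l i • g i) (t j₀) = v := by
      rw [cmap_sum_apply]
      have hi : ∀ i : Fin n, (l i • g i) (t j₀) = l i • v := by
        intro i
        have hgv : g i (t j₀) = v := by
          rw [hgapp, hψ1 j₀, one_smul]; abel
        rw [ContinuousMap.smul_apply, hgv]
      rw [Finset.sum_congr rfl fun i _ => hi i, ← Finset.sum_smul, hl1, one_smul]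
    have hlow : ‖f (t j₀) - v‖ ≤ ‖f - ∑ i, l i • g i‖ := by
      have := ContinuousMap.norm_coe_le_norm (f - ∑ i, l i • g i) (t j₀)
      rwa [ContinuousMap.sub_apply, heval] at this
    have hfin : 2 - ε < ‖f (t j₀) - v‖ := by
      have h1 : ‖f (t j₀) - v‖ = ‖f (t j₀) + f t₀‖ := by rw [hv, sub_neg_eq_add]
      have h2 : ‖f t₀ + f t₀‖ ≤ ‖f (t j₀) + f t₀‖ + ‖f t₀ - f (t j₀)‖ := by
        have heq2 : f t₀ + f t₀ = (f (t j₀) + f t₀) + (f t₀ - f (t j₀)) := by abel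
        rw [heq2]; exact norm_add_le _ _
      have h3 : ‖f t₀ + f t₀‖ = 2 := by
        have : f t₀ + f t₀ = (2 : ℝ) • f t₀ := (two_smul ℝ _).symm
        rw [this, norm_smul, hft₀]
        norm_num
      have h4 : ‖f t₀ - f (t j₀)‖ < ε := by
        rw [norm_sub_rev]; exact htW j₀
      linarith
    linarith
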